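/- Let R be a root system with Weyl group W and basis Π, and P, Q ⊆ Π with W(P,Q) = {w ∈ W : w(P) = Q} nonempty. If ν ∈ a_Q^{--} (a strictly negative combination of coroots of Q), ν' ∈ a_P^{--}, w ∈ W with w(Q) ⊂ R^+ and w(ν) = ν', and |P| = |Q|, then w(Q) ⊆ R_P^+ and in fact w(Q) = P, i.e. w ∈ W(Q,P). -/

import Mathlib

/-!
STATEMENT 19: Let P, Q ⊆ Π with W(P,Q) = {w : w(P) = Q} nonempty.  If
ν ∈ a_Q^{--} (a strictly negative combination of the coroots of Q),
ν' ∈ a_P^{--}, w ∈ W with w(Q) ⊂ R⁺, w(ν) = ν' and |P| = |Q|, then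
w(Q) ⊆ R_P^+ and in fact w(Q) = P, i.e. w ∈ W(Q,P).
-/

open scoped RealInnerProductSpace

noncomputable section

variable {E : Type*} [NormedAddCommGroup E] [InnerProductSpace ℝ E] [FiniteDimensional ℝ E]

/-- The coroot `α^∨ = 2α/⟨α,α⟩`. -/
def coroot (α : E) : E := (2 / ⟪α, α⟫) • α

/-- The positive roots of the subsystem with basis `B` inside `R`. -/
def posRootsOf (R B : Finset E) : Set E :=
  {β | β ∈ R ∧ ∃ c : E → ℝ, (∀ α, 0 ≤ c α) ∧ β = ∑ α ∈ B, c α • α}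

theorem stmt19
    (R Pi : Finset E) (hPiR : ↑Pi ⊆ (R : Set E)) (h0 : (0 : E) ∉ R)
    (hred : ∀ β ∈ R, ∀ t : ℝ, t • β ∈ R → t = 1 ∨ t = -1)
    (hcrys : ∀ α ∈ R, ∀ β ∈ R, ∃ n : ℤ, ⟪β, coroot α⟫ = (n : ℝ))
    (hbasis : ∀ β ∈ R, (∃ c : E → ℝ, (∀ α, 0 ≤ c α) ∧ β = ∑ α ∈ Pi, c α • α) ∨
                       (∃ c : E → ℝ, (∀ α, c α ≤ 0) ∧ β = ∑ α ∈ Pi, c α • α))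
    (hindep : LinearIndependent ℝ (fun x : {x // x ∈ Pi} => (x : E)))
    (s : E → (E ≃ₗ[ℝ] E))
    (hs : ∀ α ∈ Pi, ∀ x : E, s α x = x - ⟪x, coroot α⟫ • α)
    (hsR : ∀ α ∈ Pi, ∀ β ∈ R, s α β ∈ R)
    (P Q : Finset E) (hP : P ⊆ Pi) (hQ : Q ⊆ Pi) (hcard : P.card = Q.card)
    (w : E ≃ₗ[ℝ] E) (hw : w ∈ Subgroup.closure (s '' ↑Pi))
    (nu nu' : E) (cQ cP : E → ℝ)
    (hcQ : ∀ β ∈ Q, cQ β < 0) (hnu : nu = ∑ β ∈ Q, cQ β • coroot β)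
    (hcP : ∀ α ∈ P, cP α < 0) (hnu' : nu' = ∑ α ∈ P, cP α • coroot α)
    (hwQ : ∀ β ∈ Q, w β ∈ posRootsOf R Pi)
    (hwnu : w nu = nu') :
    (∀ β ∈ Q, w β ∈ posRootsOf R P) ∧ (fun x => w x) '' ↑Q = ↑P := by
  classical
  -- Basic facts
  have hR0 : ∀ β ∈ R, (β : E) ≠ 0 := fun β hβ h => h0 (h ▸ hβ)
  have hPinorm : ∀ α ∈ Pi, (0 : ℝ) < ⟪α, α⟫ := by
    intro α hα
    rw [real_inner_self_eq_norm_sq]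
    exact pow_pos (norm_pos_iff.mpr (hR0 α (hPiR hα))) 2
  -- reflections are involutions
  have hss : ∀ α ∈ Pi, ∀ x : E, s α (s α x) = x := by
    intro α hα x
    have hn := (hPinorm α hα).ne'
    have hip : ∀ y : E, ⟪y, coroot α⟫ = 2 / ⟪α, α⟫ * ⟪y, α⟫ := by
      intro y; rw [coroot, real_inner_smul_right]
    have hαα : ⟪α, coroot α⟫ = 2 := by
      rw [hip]; field_simp
    rw [hs α hα x, hs α hα (x - ⟪x, coroot α⟫ • α)]
    have : ⟪x - ⟪x, coroot α⟫ • α, coroot α⟫ = -⟪x, coroot α⟫ := by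
      rw [inner_sub_left, real_inner_smul_left, hαα]; ring
    rw [this]
    module
  -- every element of the closure preserves R in both directions
  have hclos : ∀ g : E ≃ₗ[ℝ] E, g ∈ Subgroup.closure (s '' (↑Pi : Set E)) →
      (∀ β ∈ R, g β ∈ R) ∧ (∀ β ∈ R, g⁻¹ β ∈ R) := by
    intro g hg
    induction hg using Subgroup.closure_induction with
    | mem x hx =>
      obtain ⟨α, hα, rfl⟩ := hx
      refine ⟨fun β hβ => hsR α hα β hβ, fun β hβ => ?_⟩
      have h1 : (s α)⁻¹ β = s α β := by
        have h2 : s α ((s α)⁻¹ β) = β := (s α).apply_symm_apply β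
        have h3 : s α (s α ((s α)⁻¹ β)) = s α β := by rw [h2]
        rw [hss α hα ((s α)⁻¹ β)] at h3
        exact h3
      rw [h1]; exact hsR α hα β hβ
    | one => exact ⟨fun β hβ => hβ, fun β hβ => by simpa using hβ⟩
    | mul x y hx hy ihx ihy =>
      refine ⟨fun β hβ => ihx.1 _ (ihy.1 β hβ), fun β hβ => ?_⟩
      rw [mul_inv_rev]
      exact ihy.2 _ (ihx.2 β hβ)
    | inv x hx ih => exact ⟨ih.2, by simpa using ih.1⟩
  have hwR : ∀ β ∈ R, w β ∈ R := (hclos w hw).1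
  have hwRinv : ∀ β ∈ R, w.symm β ∈ R := (hclos w hw).2
  -- coordinates with respect to Pi are unique
  have hcoord : ∀ f g : E → ℝ, (∑ α ∈ Pi, f α • α) = (∑ α ∈ Pi, g α • α) →
      ∀ α ∈ Pi, f α = g α := by
    intro f g hfg α hα
    have h0' : ∑ x ∈ Pi.attach, (f x - g x) • (x : E) = 0 := by
      have h1 : ∑ x ∈ Pi.attach, (f x - g x) • (x : E)
          = ∑ α ∈ Pi, (f α - g α) • α := Finset.sum_attach Pi (fun a => (f a - g a) • a)
      rw [h1]
      simp only [sub_smul, Finset.sum_sub_distrib, hfg, sub_self]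
    have h2 := linearIndependent_iff'.mp hindep Pi.attach (fun x => f x - g x) h0'
      ⟨α, hα⟩ (Finset.mem_attach _ _)
    have : f α - g α = 0 := h2
    linarith
  -- choose coefficients for w β over Pi
  have hcex : ∀ β : E, ∃ c : E → ℝ, β ∈ Q →
      ((∀ α, 0 ≤ c α) ∧ w β = ∑ α ∈ Pi, c α • α) := by
    intro β
    by_cases hβ : β ∈ Q
    · obtain ⟨_, c, h1, h2⟩ := hwQ β hβ
      exact ⟨c, fun _ => ⟨h1, h2⟩⟩
    · exact ⟨0, fun h => absurd h hβ⟩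
  choose c hcc using hcex
  -- two expressions for w nu as a combination of Pi
  have hF : w nu = ∑ α ∈ Pi, (∑ β ∈ Q, cQ β * (2 / ⟪β, β⟫) * c β α) • α := by
    rw [hnu, map_sum]
    have h1 : ∀ β ∈ Q, w (cQ β • coroot β)
        = ∑ α ∈ Pi, (cQ β * (2 / ⟪β, β⟫) * c β α) • α := by
      intro β hβ
      rw [map_smul, coroot, map_smul, (hcc β hβ).2, Finset.smul_sum, Finset.smul_sum]
      refine Finset.sum_congr rfl fun α hα => ?_
      rw [smul_smul, smul_smul]
    rw [Finset.sum_congr rfl h1, Finset.sum_comm]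
    exact Finset.sum_congr rfl fun α _ => (Finset.sum_smul).symm
  have hG : nu' = ∑ α ∈ Pi, (if α ∈ P then cP α * (2 / ⟪α, α⟫) else 0) • α := by
    rw [hnu']
    have h1 : (∑ α ∈ P, cP α • coroot α)
        = ∑ α ∈ P, (if α ∈ P then cP α * (2 / ⟪α, α⟫) else 0) • α :=
      Finset.sum_congr rfl fun α hα => by rw [if_pos hα, coroot, smul_smul]
    rw [h1]
    exact Finset.sum_subset hP fun x _ hx => by rw [if_neg hx, zero_smul]
  have hFG : ∀ α ∈ Pi, (∑ β ∈ Q, cQ β * (2 / ⟪β, β⟫) * c β α)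
      = (if α ∈ P then cP α * (2 / ⟪α, α⟫) else 0) :=
    hcoord _ _ (hF.symm.trans (hwnu.trans hG))
  -- coefficients of w β outside P vanish
  have hfac : ∀ β ∈ Q, cQ β * (2 / ⟪β, β⟫) < 0 := by
    intro β hβ
    have h1 := hPinorm β (hQ hβ)
    have h2 := hcQ β hβ
    have : 0 < 2 / ⟪β, β⟫ := by positivity
    exact mul_neg_of_neg_of_pos h2 this
  have hczero : ∀ α ∈ Pi, α ∉ P → ∀ β ∈ Q, c β α = 0 := by
    intro α hα hαP β hβ
    have h1 : (∑ β ∈ Q, cQ β * (2 / ⟪β, β⟫) * c β α) = 0 := by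
      rw [hFG α hα, if_neg hαP]
    have h2 : ∀ β' ∈ Q, cQ β' * (2 / ⟪β', β'⟫) * c β' α ≤ 0 := fun β' hβ' =>
      mul_nonpos_of_nonpos_of_nonneg (hfac β' hβ').le ((hcc β' hβ').1 α)
    have h3 := (Finset.sum_eq_zero_iff_of_nonpos h2).mp h1 β hβ
    rcases mul_eq_zero.mp h3 with h | h
    · exact absurd h (hfac β hβ).ne
    · exact h
  -- Part 1 : w β ∈ posRootsOf R P
  have part1 : ∀ β ∈ Q, w β ∈ posRootsOf R P := by
    intro β hβ
    refine ⟨(hwQ β hβ).1, c β, (hcc β hβ).1, ?_⟩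
    rw [(hcc β hβ).2]
    exact (Finset.sum_subset hP (fun α hα hαP => by
      rw [hczero α hα hαP β hβ, zero_smul])).symm
  refine ⟨part1, ?_⟩
  -- Part 2 : w '' Q = P
  have hwinj : Function.Injective (⇑w) := w.injective
  have hPiind : LinearIndependent ℝ ((↑) : (↑Pi : Set E) → E) := hindep
  have hQind : LinearIndependent ℝ ((↑) : (↑Q : Set E) → E) :=
    LinearIndepOn.mono (v := id) (s := ↑Pi) hPiind (by exact_mod_cast hQ)
  have hPind : LinearIndependent ℝ ((↑) : (↑P : Set E) → E) :=
    LinearIndepOn.mono (v := id) (s := ↑Pi) hPiind (by exact_mod_cast hP)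
  -- w β lies in span P
  have hwspan : ∀ β ∈ Q, w β ∈ Submodule.span ℝ (↑P : Set E) := by
    intro β hβ
    obtain ⟨_, cc, hcc1, hcc2⟩ := part1 β hβ
    rw [hcc2]
    exact Submodule.sum_mem _ fun α hα =>
      Submodule.smul_mem _ _ (Submodule.subset_span hα)
  -- span of w '' Q equals span of P
  have himgset : (⇑w '' (↑Q : Set E)) = ↑(Q.image ⇑w) := (Finset.coe_image).symm
  have himgind : LinearIndependent ℝ ((↑) : (⇑w '' (↑Q : Set E)) → E) := by
    have h1 := LinearIndepOn.image (f := (w : E →ₗ[ℝ] E)) (hQind : LinearIndepOn ℝ id (↑Q : Set E))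
      (by simp [LinearMap.ker_eq_bot.mpr hwinj])
    exact h1
  have hspansub : Submodule.span ℝ (⇑w '' (↑Q : Set E)) ≤ Submodule.span ℝ (↑P : Set E) := by
    rw [Submodule.span_le]
    rintro x ⟨β, hβ, rfl⟩
    exact hwspan β hβ
  have hfr1 : Module.finrank ℝ (Submodule.span ℝ (↑P : Set E)) = P.card :=
    finrank_span_finset_eq_card hPind
  have himgind2 : LinearIndependent ℝ ((↑) : (Q.image ⇑w : Finset E) → E) := by
    have h1 := himgset ▸ himgind
    exact h1
  have hfr2 : Module.finrank ℝ (Submodule.span ℝ (⇑w '' (↑Q : Set E))) = P.card := by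
    rw [himgset, finrank_span_finset_eq_card himgind2,
      Finset.card_image_of_injective _ hwinj, hcard]
  have hspaneq : Submodule.span ℝ (⇑w '' (↑Q : Set E)) = Submodule.span ℝ (↑P : Set E) :=
    Submodule.eq_of_le_of_finrank_eq hspansub (by rw [hfr1, hfr2])
  -- every α ∈ P is in the image of Q
  have hPsub : P ⊆ Q.image ⇑w := by
    intro α hαP
    have hαPi : α ∈ Pi := hP hαP
    have hαR : α ∈ R := hPiR hαPi
    -- w.symm α lies in span Q
    have hα1 : α ∈ Submodule.span ℝ (⇑w '' (↑Q : Set E)) := by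
      rw [hspaneq]; exact Submodule.subset_span hαP
    have hα2 : w.symm α ∈ Submodule.span ℝ (↑Q : Set E) := by
      have h1 : α ∈ Submodule.map (w : E →ₗ[ℝ] E) (Submodule.span ℝ (↑Q : Set E)) := by
        rw [Submodule.map_span]; exact hα1
      obtain ⟨y, hy, hyw⟩ := h1
      have h2 : w.symm α = y := by
        apply hwinj; rw [w.apply_symm_apply]; exact hyw.symm
      rw [h2]; exact hy
    obtain ⟨f, -, hf⟩ := Submodule.mem_span_finset.mp hα2
    -- w.symm α is a root
    have hα3 : w.symm α ∈ R := hwRinv α hαR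
    -- it is an all-nonneg or all-nonpos combination of Pi, supported on Q
    have hsupp : ∀ e : E → ℝ, w.symm α = ∑ α' ∈ Pi, e α' • α' →
        (∀ α' ∈ Pi, α' ∉ Q → e α' = 0) ∧ w.symm α = ∑ β ∈ Q, e β • β := by
      intro e he
      have hf' : w.symm α = ∑ α' ∈ Pi, (if α' ∈ Q then f α' else 0) • α' := by
        rw [← hf]
        have h1 : (∑ β ∈ Q, f β • β) = ∑ β ∈ Q, (if β ∈ Q then f β else 0) • β :=
          Finset.sum_congr rfl fun x hx => by rw [if_pos hx]
        rw [h1]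
        exact Finset.sum_subset hQ fun x _ hx => by rw [if_neg hx, zero_smul]
      have heq := hcoord _ _ (he.symm.trans hf')
      have hev : ∀ α' ∈ Pi, α' ∉ Q → e α' = 0 := by
        intro α' hα' hα'Q
        rw [heq α' hα', if_neg hα'Q]
      constructor
      · exact hev
      · rw [he]
        exact (Finset.sum_subset hQ (fun x hx hxQ => by
          rw [hev x hx hxQ, zero_smul])).symm
    -- coordinates of α itself over Pi
    have hαcoord : α = ∑ α' ∈ Pi, (if α' = α then (1 : ℝ) else 0) • α' := by
      rw [Finset.sum_eq_single_of_mem α hαPi (fun b _ hb => by rw [if_neg hb, zero_smul])]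
      rw [if_pos rfl, one_smul]
    -- use hbasis to get sign information
    rcases hbasis _ hα3 with ⟨e, he1, he2⟩ | ⟨e, he1, he2⟩
    · -- nonnegative case : the good one
      obtain ⟨hev, he3⟩ := hsupp e he2
      have hαe : α = ∑ α' ∈ Pi, (∑ β ∈ Q, e β * c β α') • α' := by
        have h1 : α = w (w.symm α) := (w.apply_symm_apply α).symm
        rw [h1, he3, map_sum]
        have h2 : ∀ β ∈ Q, w (e β • β) = ∑ α' ∈ Pi, (e β * c β α') • α' := by
          intro β hβ
          rw [map_smul, (hcc β hβ).2, Finset.smul_sum]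
          exact Finset.sum_congr rfl fun α' _ => smul_smul _ _ _
        rw [Finset.sum_congr rfl h2, Finset.sum_comm]
        exact Finset.sum_congr rfl fun α' _ => (Finset.sum_smul).symm
      have hco := hcoord _ _ (hαe.symm.trans hαcoord)
      have hatα : (∑ β ∈ Q, e β * c β α) = 1 := by
        have := hco α hαPi; rwa [if_pos rfl] at this
      -- find β0 with a nonzero term
      have hne : (∑ β ∈ Q, e β * c β α) ≠ 0 := by rw [hatα]; norm_num
      obtain ⟨β0, hβ0Q, hβ0⟩ := Finset.exists_ne_zero_of_sum_ne_zero hne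
      have heβ0 : 0 < e β0 := by
        rcases (he1 β0).lt_or_eq with h | h
        · exact h
        · exact absurd (by rw [← h, zero_mul]) hβ0
      -- c β0 vanishes at every other α'
      have hcother : ∀ α' ∈ Pi, α' ≠ α → c β0 α' = 0 := by
        intro α' hα' hne'
        have h1 : (∑ β ∈ Q, e β * c β α') = 0 := by
          have := hco α' hα'; rwa [if_neg hne'] at this
        have h2 : ∀ β ∈ Q, 0 ≤ e β * c β α' := fun β hβ =>
          mul_nonneg (he1 β) ((hcc β hβ).1 α')
        have h3 := (Finset.sum_eq_zero_iff_of_nonneg h2).mp h1 β0 hβ0Q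
        rcases mul_eq_zero.mp h3 with h | h
        · exact absurd h heβ0.ne'
        · exact h
      -- hence w β0 is a positive multiple of α
      have hwβ0 : w β0 = c β0 α • α := by
        rw [(hcc β0 hβ0Q).2]
        rw [Finset.sum_eq_single_of_mem α hαPi (fun b hb hbne => by
          rw [hcother b hb hbne, zero_smul])]
      have hcβ0α : c β0 α = 1 := by
        have h1 : c β0 α • α ∈ R := by rw [← hwβ0]; exact (hwQ β0 hβ0Q).1
        rcases hred α hαR (c β0 α) h1 with h | h
        · exact h
        · exfalso
          have h2 : (0:ℝ) ≤ c β0 α := (hcc β0 hβ0Q).1 α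
          rw [h] at h2; linarith
      have : w β0 = α := by rw [hwβ0, hcβ0α, one_smul]
      exact Finset.mem_image.mpr ⟨β0, hβ0Q, this⟩
    · -- nonpositive case : impossible
      exfalso
      obtain ⟨hev, he3⟩ := hsupp e he2
      have hαe : α = ∑ α' ∈ Pi, (∑ β ∈ Q, e β * c β α') • α' := by
        have h1 : α = w (w.symm α) := (w.apply_symm_apply α).symm
        rw [h1, he3, map_sum]
        have h2 : ∀ β ∈ Q, w (e β • β) = ∑ α' ∈ Pi, (e β * c β α') • α' := by
          intro β hβ
          rw [map_smul, (hcc β hβ).2, Finset.smul_sum]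
          exact Finset.sum_congr rfl fun α' _ => smul_smul _ _ _
        rw [Finset.sum_congr rfl h2, Finset.sum_comm]
        exact Finset.sum_congr rfl fun α' _ => (Finset.sum_smul).symm
      have hco := hcoord _ _ (hαe.symm.trans hαcoord)
      have hatα : (∑ β ∈ Q, e β * c β α) = 1 := by
        have := hco α hαPi; rwa [if_pos rfl] at this
      have hle : (∑ β ∈ Q, e β * c β α) ≤ 0 :=
        Finset.sum_nonpos fun β hβ =>
          mul_nonpos_of_nonpos_of_nonneg (he1 β) ((hcc β hβ).1 α)
      linarith
  -- conclude by cardinality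
  have himgeq : Q.image ⇑w = P := by
    refine (Finset.eq_of_subset_of_card_le hPsub ?_).symm
    rw [Finset.card_image_of_injective _ hwinj]
    exact hcard.ge
  have : (fun x => w x) '' (↑Q : Set E) = ⇑w '' (↑Q : Set E) := rfl
  rw [this, ← Finset.coe_image, himgeq]

end
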